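/- Let n ≥ 1, L ≥ 1, r_0 > 0 and set r = 4(n−1)(2L+r_0) + 2L. If y ∈ (Z^d)^n satisfies ‖y‖_∞ ≥ 2r (i.e., y ∉ Λ_{2r}(0)), then for every x ∈ (Z^d)^n with ‖x‖_∞ < r, the cubes Λ_L(y) and Λ_L(x) are separable. -/
import Mathlib

/-- The projection `Π_J Λ_L(u) = ⋃_{j∈J} Λ_L(u_j) ⊂ ℝ^d`, where `Λ_L(v)` is the
open sup-norm cube of radius `L` around `v` (`Fin d → ℝ` carries the sup norm). -/
def piProj (d n : ℕ) (L : ℝ) (u : Fin n → Fin d → ℤ) (J : Finset (Fin n)) :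
    Set (Fin d → ℝ) :=
  ⋃ j ∈ J, Metric.ball (fun i => ((u j i : ℝ))) L

/-- Cubes `Λ_L(u)` and `Λ_L(v)` are pre-separable if for some nonempty
`J ⊆ {1,…,n}` and one of the two orderings,
`Π_J Λ_L(u) ∩ (Π_{J^c} Λ_L(u) ∪ Π Λ_L(v)) = ∅`. -/
def PreSeparable (d n : ℕ) (L : ℝ) (u v : Fin n → Fin d → ℤ) : Prop :=
  ∃ J : Finset (Fin n), J.Nonempty ∧
    (piProj d n L u J ∩ (piProj d n L u Jᶜ ∪ piProj d n L v Finset.univ) = ∅ ∨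
     piProj d n L v J ∩ (piProj d n L v Jᶜ ∪ piProj d n L u Finset.univ) = ∅)

lemma castNormPi (d : ℕ) (u : Fin d → ℤ) : ‖(fun i => (u i : ℝ))‖ = ‖u‖ := rfl

lemma castDistPi (d : ℕ) (u v : Fin d → ℤ) :
    dist (fun i => ((u i : ℝ))) (fun i => ((v i : ℝ))) = ‖u - v‖ := by
  rw [dist_eq_norm]
  have : (fun i => ((u i : ℝ))) - (fun i => ((v i : ℝ))) = fun i => (((u - v) i : ℝ)) := by
    funext i; simp [sub_eq_add_neg]
  rw [this, castNormPi]

/-- With `r = 4(n−1)(2L+r₀) + 2L`, if `‖y‖_∞ ≥ 2r` (i.e.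
`y ∉ Λ_{2r}(0)`), then for every `x` with `‖x‖_∞ < r` the cubes `Λ_L(y)` and
`Λ_L(x)` are separable: pre-separable and `‖y − x‖_∞ ≥ r`. -/
theorem stmt4 (d n : ℕ) (hn : 1 ≤ n) (L : ℕ) (hL : 1 ≤ L) (r0 : ℝ) (hr0 : 0 < r0)
    (r : ℝ) (hr : r = 4 * ((n : ℝ) - 1) * (2 * L + r0) + 2 * L)
    (y : Fin n → Fin d → ℤ) (hy : 2 * r ≤ ‖y‖) :
    ∀ x : Fin n → Fin d → ℤ, ‖x‖ < r →
      PreSeparable d n L y x ∧ r ≤ ‖y - x‖ := by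
  have hL1 : (1:ℝ) ≤ (L:ℝ) := by exact_mod_cast hL
  have hn1 : (1:ℝ) ≤ (n:ℝ) := by exact_mod_cast hn
  have hrL : 2*(L:ℝ) ≤ r := by nlinarith
  have hrpos : 0 < r := by linarith
  intro x hx
  constructor
  · -- PreSeparable
    set f : Fin n → ℝ := fun j => ‖y j‖ with hf
    have hne : Nonempty (Fin n) := ⟨⟨0, hn⟩⟩
    obtain ⟨j0, hj0⟩ := Finite.exists_max f
    have hyj0 : 2*r ≤ f j0 :=
      le_trans hy ((pi_norm_le_iff_of_nonneg (norm_nonneg _)).mpr hj0)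
    -- pigeonhole: a free interval
    have key : ∃ m : Fin n, ∀ k, k ≠ j0 →
        ¬ (r + 2*L*(m:ℕ) ≤ f k ∧ f k < r + 2*L*(m:ℕ) + 2*L) := by
      by_contra hcon
      push_neg at hcon
      choose g hg1 hg2 using hcon
      have hinj : Function.Injective g := by
        intro m m' hmm
        obtain ⟨h1a, h1b⟩ := hg2 m
        obtain ⟨h2a, h2b⟩ := hg2 m'
        rw [hmm] at h1a h1b
        have e1 : ((m:ℕ):ℝ) < ((m':ℕ):ℝ) + 1 := by nlinarith
        have e2 : ((m':ℕ):ℝ) < ((m:ℕ):ℝ) + 1 := by nlinarith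
        have e1' : (m:ℕ) < (m':ℕ) + 1 := by exact_mod_cast e1
        have e2' : (m':ℕ) < (m:ℕ) + 1 := by exact_mod_cast e2
        exact Fin.ext (by omega)
      obtain ⟨m, hm⟩ := Finite.surjective_of_injective hinj j0
      exact hg1 m hm
    obtain ⟨m, hm⟩ := key
    set a : ℝ := r + 2*L*(m:ℕ) with ha
    have hra : r ≤ a := by
      have : (0:ℝ) ≤ 2*L*(m:ℕ) := by positivity
      linarith
    set J : Finset (Fin n) := Finset.univ.filter (fun j => a + 2*L ≤ f j) with hJ
    have hmemJ : ∀ j, j ∈ J ↔ a + 2*L ≤ f j := by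
      intro j; simp [hJ]
    have hj0J : j0 ∈ J := by
      rw [hmemJ]
      have hmn : ((m:ℕ):ℝ) + 1 ≤ (n:ℝ) := by exact_mod_cast m.isLt
      have h2Ln : 2*(L:ℝ)*(n:ℝ) ≤ r := by nlinarith
      have : a + 2*L ≤ 2*r := by
        rw [ha]; nlinarith
      linarith
    refine ⟨J, ⟨j0, hj0J⟩, Or.inl ?_⟩
    -- distances
    have hyy : ∀ j ∈ J, ∀ k, k ∉ J → 2*(L:ℝ) ≤ dist (fun i => ((y j i : ℝ))) (fun i => ((y k i : ℝ))) := by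
      intro j hj k hk
      have hfj : a + 2*L ≤ f j := (hmemJ j).mp hj
      have hfk : ¬ (a + 2*L ≤ f k) := fun h => hk ((hmemJ k).mpr h)
      push_neg at hfk
      have hkj0 : k ≠ j0 := fun h => hk (h ▸ hj0J)
      have hfk2 : f k < a := by
        have := hm k hkj0
        by_contra hcon
        push_neg at hcon
        exact this ⟨hcon, by linarith⟩
      rw [castDistPi]
      have := norm_sub_norm_le (y j) (y k)
      simp only [hf] at hfj hfk2
      linarith
    have hyx : ∀ j ∈ J, ∀ k, 2*(L:ℝ) ≤ dist (fun i => ((y j i : ℝ))) (fun i => ((x k i : ℝ))) := by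
      intro j hj k
      have hfj : a + 2*L ≤ f j := (hmemJ j).mp hj
      have hxk : ‖x k‖ ≤ ‖x‖ := norm_le_pi_norm x k
      rw [castDistPi]
      have := norm_sub_norm_le (y j) (x k)
      simp only [hf] at hfj
      linarith
    rw [Set.eq_empty_iff_forall_notMem]
    rintro p ⟨hp1, hp2⟩
    simp only [piProj, Set.mem_iUnion, Metric.mem_ball, exists_prop] at hp1
    obtain ⟨j, hjJ, hpj⟩ := hp1
    rcases hp2 with hp2 | hp2 <;>
      simp only [piProj, Set.mem_iUnion, Metric.mem_ball, exists_prop,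
        Finset.mem_univ, true_and, Finset.mem_compl] at hp2
    · obtain ⟨k, hk, hpk⟩ := hp2
      have h2 := hyy j hjJ k hk
      have htri := dist_triangle (fun i => ((y j i : ℝ))) p (fun i => ((y k i : ℝ)))
      rw [dist_comm] at hpj
      linarith
    · obtain ⟨k, hpk⟩ := hp2
      have h2 := hyx j hjJ k
      have htri := dist_triangle (fun i => ((y j i : ℝ))) p (fun i => ((x k i : ℝ)))
      rw [dist_comm] at hpj
      linarith
  · have := norm_sub_norm_le y x
    linarith
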